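/- Let f: ℝⁿ → ℝ be separable convex, let x ∈ ℝⁿ, and let y₁, y₂ ∈ ℝⁿ lie in the same orthant (i.e., (y₁)ᵢ(y₂)ᵢ ≥ 0 for all i). Then f(x + y₁ + y₂) − f(x + y₁) ≥ f(x + y₂) − f(x). -/
import Mathlib

lemma convex_increment_key (g : ℝ → ℝ) (hg : ConvexOn ℝ Set.univ g)
    (a s t : ℝ) (hst : 0 ≤ s * t) :
    g (a + s) + g (a + t) ≤ g a + g (a + s + t) := by
  rcases eq_or_ne (s + t) 0 with h0 | h0
  · have hs : s = 0 := by nlinarith [sq_nonneg s, sq_nonneg t]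
    have ht : t = 0 := by nlinarith [sq_nonneg s, sq_nonneg t]
    simp [hs, ht]
  · have hprod : 0 ≤ (s / (s + t)) * (t / (s + t)) := by
      rw [div_mul_div_comm]
      exact div_nonneg hst (mul_self_nonneg _)
    have hsum : s / (s + t) + t / (s + t) = 1 := by field_simp
    have hl : 0 ≤ s / (s + t) := by nlinarith
    have hm : 0 ≤ t / (s + t) := by nlinarith
    have h1 := hg.2 (Set.mem_univ a) (Set.mem_univ (a + s + t)) hm hl (by linarith)
    have h2 := hg.2 (Set.mem_univ a) (Set.mem_univ (a + s + t)) hl hm hsum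
    simp only [smul_eq_mul] at h1 h2
    have e1 : t / (s + t) * a + s / (s + t) * (a + s + t) = a + s := by
      field_simp; ring
    have e2 : s / (s + t) * a + t / (s + t) * (a + s + t) = a + t := by
      field_simp; ring
    rw [e1] at h1
    rw [e2] at h2
    have key : t / (s + t) * g a + s / (s + t) * g (a + s + t)
        + (s / (s + t) * g a + t / (s + t) * g (a + s + t))
        = g a + g (a + s + t) := by
      linear_combination (g a + g (a + s + t)) * hsum
    linarith [h1, h2, key]

/-- For a separable convex `f : ℝⁿ → ℝ` and vectors `y₁, y₂` lying in the same
orthant, `f(x + y₁ + y₂) − f(x + y₁) ≥ f(x + y₂) − f(x)`. -/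
theorem separable_convex_orthant_superadditivity (n : ℕ)
    (f : (Fin n → ℝ) → ℝ) (fi : Fin n → ℝ → ℝ)
    (hf : ∀ x, f x = ∑ i, fi i (x i))
    (hconv : ∀ i, ConvexOn ℝ Set.univ (fi i))
    (x y₁ y₂ : Fin n → ℝ) (h : ∀ i, 0 ≤ y₁ i * y₂ i) :
    f (x + y₁ + y₂) - f (x + y₁) ≥ f (x + y₂) - f x := by
  simp only [hf, Pi.add_apply]
  rw [ge_iff_le, sub_le_sub_iff, ← Finset.sum_add_distrib, ← Finset.sum_add_distrib]
  apply Finset.sum_le_sum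
  intro i _
  have := convex_increment_key (fi i) (hconv i) (x i) (y₁ i) (y₂ i) (h i)
  linarith [this]
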